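/- Let C be a category with finite products and x u y v z w objects of C. Given lenses in normal form (get : x ⟶ y, put : x ⨯ v ⟶ u) and (get' : y ⟶ z, put' : y ⨯ w ⟶ v), the composite of their classes in the lens coend, ⟨prod.lift (𝟙 x) get, put | x⟩ ≫ ⟨prod.lift (𝟙 y) get', put' | y⟩, equals ⟨prod.lift (𝟙 x) (get ≫ get'), prod.lift prod.fst (prod.lift (prod.fst ≫ get) prod.snd ≫ put') ≫ put | x⟩ in Lens((x,u),(z,w)); that is, lens composition in get/put form is given by get'' = get ≫ get' and put''(a, w) = put(a, put'(get a, w)). -/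

import Mathlib

open CategoryTheory CategoryTheory.Limits

variable {C : Type*} [Category C] [HasFiniteProducts C]

/-- Representatives of cartesian lenses from `(x,u)` to `(y,v)`. -/
def LensRep (x u y v : C) : Type _ :=
  Σ c : C, (x ⟶ c ⨯ y) × (c ⨯ v ⟶ u)

/-- The coend relation: for `f : n ⟶ c`, `α : x ⟶ n ⨯ y`, `β : c ⨯ v ⟶ u`,
`(c, α ≫ prod.map f (𝟙 y), β)` is related to `(n, α, prod.map f (𝟙 v) ≫ β)`. -/
def LensRel (x u y v : C) : LensRep x u y v → LensRep x u y v → Prop :=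
  fun A B => ∃ f : B.1 ⟶ A.1,
    A.2.1 = B.2.1 ≫ prod.map f (𝟙 y) ∧ B.2.2 = prod.map f (𝟙 v) ≫ A.2.2

/-- Lens composition on representatives:
`⟨α, β | c⟩ ≫ ⟨α', β' | d⟩ :=
⟨α ≫ prod.map (𝟙 c) α' ≫ (prod.associator c d z).inv,
 (prod.associator c d w).hom ≫ prod.map (𝟙 c) β' ≫ β | c ⨯ d⟩`. -/
noncomputable def lensCompRep {x u y v z w : C} (A : LensRep x u y v) (B : LensRep y v z w) :
    LensRep x u z w :=
  ⟨A.1 ⨯ B.1,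
    A.2.1 ≫ prod.map (𝟙 A.1) B.2.1 ≫ (prod.associator A.1 B.1 z).inv,
    (prod.associator A.1 B.1 w).hom ≫ prod.map (𝟙 A.1) B.2.2 ≫ A.2.2⟩

/-- Lens composition in get/put normal form: `get'' = get ≫ get'` and
`put''(a, w) = put(a, put'(get a, w))`. -/
theorem lens_comp_get_put (x u y v z w : C)
    (get : x ⟶ y) (put : x ⨯ v ⟶ u) (get' : y ⟶ z) (put' : y ⨯ w ⟶ v) :
    Quot.mk (LensRel x u z w)
        (lensCompRep (⟨x, prod.lift (𝟙 x) get, put⟩ : LensRep x u y v)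
          (⟨y, prod.lift (𝟙 y) get', put'⟩ : LensRep y v z w)) =
      Quot.mk (LensRel x u z w)
        ⟨x, prod.lift (𝟙 x) (get ≫ get'),
          prod.lift prod.fst (prod.lift (prod.fst ≫ get) prod.snd ≫ put') ≫ put⟩ := by
  apply Quot.sound
  refine ⟨prod.lift (𝟙 x) get, ?_, ?_⟩
  · simp [lensCompRep, prod.map_id_id]
    ext
    · simp [prod.lift_fst, prod.lift_snd, prod.lift_fst_assoc, prod.lift_snd_assoc]; erw [prod.map_fst_assoc]; simp [prod.lift_fst, prod.lift_snd, prod.lift_fst_assoc, prod.lift_snd_assoc]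
    · simp [prod.lift_fst, prod.lift_snd, prod.lift_fst_assoc, prod.lift_snd_assoc]; erw [prod.map_fst_assoc]; simp [prod.lift_fst, prod.lift_snd, prod.lift_fst_assoc, prod.lift_snd_assoc]
    · simp [prod.lift_fst, prod.lift_snd, prod.lift_fst_assoc, prod.lift_snd_assoc]; erw [prod.map_snd]; simp [prod.lift_fst, prod.lift_snd, prod.lift_fst_assoc, prod.lift_snd_assoc]
  · simp only [lensCompRep, ← Category.assoc]
    congr 1
    ext
    · simp [prod.lift_fst, prod.lift_snd, prod.lift_fst_assoc, prod.lift_snd_assoc]; erw [prod.map_fst_assoc]; simp [prod.lift_fst, prod.lift_snd, prod.lift_fst_assoc, prod.lift_snd_assoc]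
    · simp [prod.lift_fst, prod.lift_snd, prod.lift_fst_assoc, prod.lift_snd_assoc]; erw [prod.map_fst_assoc, prod.map_snd]; simp [prod.lift_fst, prod.lift_snd, prod.lift_fst_assoc, prod.lift_snd_assoc]
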